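/- Let X be the spine K of a finite simplicial complex L realized in its barycentric subdivision L', and let N = N(K, L'') be a regular neighborhood of K (the simplicial neighborhood in a barycentric subdivision of L' relative to K). Then the boundary Ṅ of the regular neighborhood, i.e., the subcomplex of simplices of N disjoint from K, equals the disjoint union of the links Lk_{L''}(v) over the original vertices v ∈ L⁽⁰⁾. -/

import Mathlib

open Finset Set

/-- An abstract simplicial complex on vertex type `V`: a downward-closed collection of
nonempty finite subsets of `V`. -/
structure AbsSC (V : Type*) where
  faces : Set (Finset V)
  nonempty_of_mem : ∀ s ∈ faces, s.Nonempty
  down_closed : ∀ s ∈ faces, ∀ t ⊆ s, t.Nonempty → t ∈ faces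

namespace AbsSC

variable {V : Type*}

/-- The barycentric subdivision: faces are nonempty chains of faces. -/
def sd (X : AbsSC V) : AbsSC (Finset V) where
  faces := {c | c.Nonempty ∧ ↑c ⊆ X.faces ∧ IsChain (· ⊆ ·) (c : Set (Finset V))}
  nonempty_of_mem := fun _ hs => hs.1
  down_closed := fun _ hs _ hts htne =>
    ⟨htne, fun _ hx => hs.2.1 (hts hx), by exact hs.2.2.mono (Finset.coe_subset.mpr hts)⟩

/-- The link of a face `σ`: faces disjoint from `σ` whose union with `σ` is a face. -/
def link [DecidableEq V] (X : AbsSC V) (σ : Finset V) : AbsSC V where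
  faces := {τ | τ.Nonempty ∧ τ ∩ σ = ∅ ∧ τ ∪ σ ∈ X.faces}
  nonempty_of_mem := fun _ hs => hs.1
  down_closed := fun s hs t hts htne => by
    refine ⟨htne, ?_, ?_⟩
    · rw [← Finset.subset_empty, ← hs.2.1]
      exact Finset.inter_subset_inter hts (le_refl σ)
    · exact X.down_closed _ hs.2.2 _ (Finset.union_subset_union hts (le_refl σ))
        (htne.mono Finset.subset_union_left)

end AbsSC

variable {V : Type*} [DecidableEq V]

/-- The vertices of the subdivided spine `K ⊆ L''`: chains all of whose members have at
least two vertices (barycenters of simplices of positive dimension, and chains thereof). -/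
def IsSpineVertex (c : Finset (Finset V)) : Prop := ∀ s ∈ c, 2 ≤ s.card

/-- The simplicial neighborhood `N(K, L'')`: the union of the stars in `L''` of the
vertices of the (subdivided) spine `K`. -/
def regNbhdFaces (L : AbsSC V) : Set (Finset (Finset (Finset V))) :=
  {τ | τ ∈ L.sd.sd.faces ∧ ∃ c : Finset (Finset V),
      c ∈ L.sd.faces ∧ IsSpineVertex c ∧ insert c τ ∈ L.sd.sd.faces}

/-- The boundary `Ṅ` of the regular neighborhood: faces of `N(K, L'')` disjoint from `K`. -/
def regNbhdBoundary (L : AbsSC V) : Set (Finset (Finset (Finset V))) :=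
  {τ | τ ∈ regNbhdFaces L ∧ ∀ c ∈ τ, ¬ IsSpineVertex c}

lemma chain_exists_min {α : Type*} (s : Finset (Finset α)) (hne : s.Nonempty)
    (hc : IsChain (· ⊆ ·) (s : Set (Finset α))) : ∃ m ∈ s, ∀ x ∈ s, m ⊆ x := by
  obtain ⟨m, hm, hmin⟩ := s.exists_minimal hne
  refine ⟨m, hm, fun x hx => ?_⟩
  rcases eq_or_ne x m with rfl | hne'
  · exact subset_rfl
  · rcases hc hx hm hne' with h | h
    · exact absurd (Finset.Subset.antisymm h (hmin hx h)) hne'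
    · exact h

/-- Every face of the link of `{{v}}` in `L''` has all its vertices (chains) containing
the face `{v}`. -/
lemma mem_singleton_of_mem_link (L : AbsSC V) (v : V) (τ : Finset (Finset (Finset V)))
    (h : τ ∈ (L.sd.sd.link {({({v} : Finset V)} : Finset (Finset V))}).faces) :
    ∀ d ∈ τ, ({v} : Finset V) ∈ d := by
  obtain ⟨hτne, hdisj, hun⟩ := h
  obtain ⟨_, hsub, hchain⟩ := hun
  intro d hd
  have hvn : ({({v} : Finset V)} : Finset (Finset V)) ∉ τ := by
    intro hmem
    have : ({({v} : Finset V)} : Finset (Finset V)) ∈ τ ∩ {({({v} : Finset V)} : Finset (Finset V))} :=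
      Finset.mem_inter.mpr ⟨hmem, Finset.mem_singleton_self _⟩
    rw [hdisj] at this
    exact absurd this (Finset.notMem_empty _)
  have hne' : d ≠ ({({v} : Finset V)} : Finset (Finset V)) := fun h' => hvn (h' ▸ hd)
  have hdm : d ∈ (↑(τ ∪ {({({v} : Finset V)} : Finset (Finset V))}) : Set (Finset (Finset V))) := by
    simp [hd]
  have hvm : ({({v} : Finset V)} : Finset (Finset V)) ∈
      (↑(τ ∪ {({({v} : Finset V)} : Finset (Finset V))}) : Set (Finset (Finset V))) := by
    simp
  rcases hchain hdm hvm hne' with h' | h'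
  · exfalso
    have hdn : d.Nonempty := (hsub (by simp [hd] : d ∈ _)).1
    rcases Finset.subset_singleton_iff.mp h' with rfl | rfl
    · exact hdn.ne_empty rfl
    · exact hne' rfl
  · exact Finset.singleton_subset_iff.mp h'

/-- the boundary of the regular neighborhood of the spine `K` in `L''` is
the disjoint union of the links `Lk_{L''}(v)` over the original vertices `v ∈ L⁽⁰⁾`
(each such `v` appearing in `L''` as the chain `{{v}}`). -/
theorem regNbhdBoundary_eq_disjoint_union_links (L : AbsSC V) (hfin : L.faces.Finite) :
    (∀ τ, τ ∈ regNbhdBoundary L ↔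
      ∃ v : V, ({v} : Finset V) ∈ L.faces ∧
        τ ∈ (L.sd.sd.link {({({v} : Finset V)} : Finset (Finset V))}).faces) ∧
    (∀ v w : V, ({v} : Finset V) ∈ L.faces → ({w} : Finset V) ∈ L.faces → v ≠ w →
      (L.sd.sd.link {({({v} : Finset V)} : Finset (Finset V))}).faces ∩
        (L.sd.sd.link {({({w} : Finset V)} : Finset (Finset V))}).faces = ∅) := by
  constructor
  · intro τ
    constructor
    · -- forward direction
      rintro ⟨⟨⟨hτne, hτsub, hτchain⟩, c, hcsd, hcspine, hins⟩, hbd⟩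
      obtain ⟨d₀, hd₀, hmin⟩ := chain_exists_min τ hτne hτchain
      have hd₀sd : d₀ ∈ L.sd.faces := hτsub (by simpa using hd₀)
      -- d₀ is not a spine vertex: it contains a singleton {v}
      have : ¬ IsSpineVertex d₀ := hbd d₀ hd₀
      simp only [IsSpineVertex, not_forall] at this
      obtain ⟨s, hs, hscard⟩ := this
      have hsne : s.Nonempty := L.nonempty_of_mem s (hd₀sd.2.1 (by simpa using hs))
      have hcard1 : s.card = 1 := by
        have h1 : 1 ≤ s.card := Finset.card_pos.mpr hsne
        omega
      obtain ⟨v, rfl⟩ := Finset.card_eq_one.mp hcard1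
      refine ⟨v, hd₀sd.2.1 (by simpa using hs), ?_, ?_, ?_⟩
      · exact hτne
      · -- τ ∩ {{{v}}} = ∅, i.e. {{v}} ∉ τ
        rw [Finset.inter_comm]
        rw [Finset.singleton_inter_of_notMem]
        intro hmem
        -- c is comparable with {{v}} in the chain insert c τ
        obtain ⟨_, hins_sub, hins_chain⟩ := hins
        have hcne : c.Nonempty := hcsd.1
        have hcneq : c ≠ ({({v} : Finset V)} : Finset (Finset V)) := by
          rintro rfl
          have := hcspine {v} (Finset.mem_singleton_self _)
          simp at this
        have hc1 : c ∈ (↑(insert c τ) : Set (Finset (Finset V))) := by simp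
        have hc2 : ({({v} : Finset V)} : Finset (Finset V)) ∈
            (↑(insert c τ) : Set (Finset (Finset V))) := by simp [hmem]
        rcases hins_chain hc1 hc2 hcneq with h' | h'
        · rcases Finset.subset_singleton_iff.mp h' with rfl | rfl
          · exact hcne.ne_empty rfl
          · exact hcneq rfl
        · have := hcspine {v} (Finset.singleton_subset_iff.mp h')
          simp at this
      · -- τ ∪ {{{v}}} ∈ L''
        refine ⟨Finset.Nonempty.inl hτne, ?_, ?_⟩
        · intro d hd
          rw [Finset.coe_union] at hd
          rcases hd with hd | hd
          · exact hτsub hd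
          · simp only [Finset.coe_singleton, Set.mem_singleton_iff] at hd
            subst hd
            exact ⟨Finset.singleton_nonempty _, by
              intro x hx
              simp only [Finset.coe_singleton, Set.mem_singleton_iff] at hx
              subst hx
              exact hd₀sd.2.1 (by simpa using hs), by
              simp [Set.pairwise_singleton, IsChain]⟩
        · rw [Finset.coe_union, Finset.coe_singleton, Set.union_comm, Set.singleton_union]
          refine hτchain.insert (fun d hd hne' => Or.inl ?_)
          have : ({v} : Finset V) ∈ d := hmin d hd (by simpa using hs)
          exact Finset.singleton_subset_iff.mpr this
    · -- reverse direction
      rintro ⟨v, hv, hlink⟩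
      have hkey := mem_singleton_of_mem_link L v τ hlink
      obtain ⟨hτne, hdisj, hun⟩ := hlink
      have hτsd : τ ∈ L.sd.sd.faces :=
        L.sd.sd.down_closed _ hun τ Finset.subset_union_left hτne
      obtain ⟨hτne', hτsub, hτchain⟩ := hτsd
      refine ⟨⟨⟨hτne', hτsub, hτchain⟩, ?_⟩, ?_⟩
      · -- find the spine vertex c = {s}
        obtain ⟨d₀, hd₀, hmin⟩ := chain_exists_min τ hτne hτchain
        have hd₀sd : d₀ ∈ L.sd.faces := hτsub (by simpa using hd₀)
        have hvd₀ : ({v} : Finset V) ∈ d₀ := hkey d₀ hd₀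
        have hvn : ({({v} : Finset V)} : Finset (Finset V)) ∉ τ := by
          intro hmem
          have : ({({v} : Finset V)} : Finset (Finset V)) ∈ τ ∩ {({({v} : Finset V)} : Finset (Finset V))} :=
            Finset.mem_inter.mpr ⟨hmem, Finset.mem_singleton_self _⟩
          rw [hdisj] at this
          exact absurd this (Finset.notMem_empty _)
        have hd₀ne : d₀ ≠ ({({v} : Finset V)} : Finset (Finset V)) := fun h' => hvn (h' ▸ hd₀)
        have : ¬ d₀ ⊆ ({({v} : Finset V)} : Finset (Finset V)) := by
          intro h'
          rcases Finset.subset_singleton_iff.mp h' with rfl | rfl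
          · exact (hd₀sd.1).ne_empty rfl
          · exact hd₀ne rfl
        obtain ⟨s, hs, hsv⟩ := Finset.not_subset.mp this
        simp only [Finset.mem_singleton] at hsv
        have hsL : s ∈ L.faces := hd₀sd.2.1 (by simpa using hs)
        have hsne : s.Nonempty := L.nonempty_of_mem s hsL
        -- s and {v} comparable in the chain d₀, s ≠ {v} ⟹ {v} ⊊ s
        have hvs : ({v} : Finset V) ⊆ s := by
          rcases hd₀sd.2.2 (by simpa using hs) (by simpa using hvd₀) hsv with h' | h'
          · rcases Finset.subset_singleton_iff.mp h' with rfl | rfl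
            · exact absurd rfl hsne.ne_empty
            · exact absurd rfl hsv
          · exact h'
        have hscard : 2 ≤ s.card := by
          have hvmem : v ∈ s := Finset.singleton_subset_iff.mp hvs
          obtain ⟨w, hw, hwv⟩ := Finset.not_subset.mp
            (fun h' => hsv (Finset.Subset.antisymm h' hvs))
          simp only [Finset.mem_singleton] at hwv
          have := Finset.one_lt_card.mpr ⟨v, hvmem, w, hw, fun h => hwv h.symm⟩
          omega
        refine ⟨{s}, ⟨Finset.singleton_nonempty _, ?_, by simp [Set.pairwise_singleton, IsChain]⟩,
          ?_, ?_, ?_, ?_⟩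
        · intro x hx
          simp only [Finset.coe_singleton, Set.mem_singleton_iff] at hx
          subst hx; exact hsL
        · intro t ht
          simp only [Finset.mem_singleton] at ht
          subst ht; exact hscard
        · exact Finset.insert_nonempty _ _
        · intro d hd
          rw [Finset.coe_insert] at hd
          rcases hd with hd | hd
          · subst hd
            exact ⟨Finset.singleton_nonempty _, by
              intro x hx
              simp only [Finset.coe_singleton, Set.mem_singleton_iff] at hx
              subst hx; exact hsL, by simp [Set.pairwise_singleton, IsChain]⟩
          · exact hτsub hd
        · rw [Finset.coe_insert]
          refine hτchain.insert (fun d hd hne' => Or.inl ?_)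
          exact Finset.singleton_subset_iff.mpr (hmin d hd hs)
      · -- no element of τ is a spine vertex
        intro d hd hspine
        have := hspine {v} (hkey d hd)
        simp at this
  · -- disjointness
    intro v w hv hw hvw
    rw [Set.eq_empty_iff_forall_notMem]
    rintro τ ⟨h1, h2⟩
    obtain ⟨d, hd⟩ := h1.1
    have hvd : ({v} : Finset V) ∈ d := mem_singleton_of_mem_link L v τ h1 d hd
    have hwd : ({w} : Finset V) ∈ d := mem_singleton_of_mem_link L w τ h2 d hd
    obtain ⟨_, hsub, _⟩ := h1.2.2
    have hdsd : d ∈ L.sd.faces := hsub (by simp [hd])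
    have hne : ({v} : Finset V) ≠ {w} := fun h => hvw (Finset.singleton_injective h)
    rcases hdsd.2.2 (by simpa using hvd) (by simpa using hwd) hne with h' | h' <;>
      · simp only [Finset.singleton_subset_iff, Finset.mem_singleton] at h'
        first | exact hvw h' | exact hvw h'.symm
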